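/- Let n = d·e be a squarefree positive integer, let t be an integer whose residue class modulo e has multiplicative order d in (ℤ/eℤ)ˣ, and let G = G(d,e,t). Then the number k(G) of conjugacy classes of G satisfies d ≤ k(G) and e ≤ d·k(G). -/

import Mathlib

/-- The units of `ZMod e` act on `Multiplicative (ZMod e)` as (multiplicative) automorphisms. -/
def unitsMulAut (e : ℕ) : (ZMod e)ˣ →* MulAut (Multiplicative (ZMod e)) where
  toFun u := AddEquiv.toMultiplicative (DistribMulAction.toAddAut (ZMod e)ˣ (ZMod e) u)
  map_one' := by
    ext x
    show Multiplicative.ofAdd ((1 : (ZMod e)ˣ) • x.toAdd) = x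
    simp
  map_mul' u v := by
    ext x
    show Multiplicative.ofAdd (((u * v) : (ZMod e)ˣ) • x.toAdd)
      = Multiplicative.ofAdd (u • v • x.toAdd)
    rw [mul_smul]

/-- The homomorphism `Multiplicative (ZMod d) →* (ZMod e)ˣ` sending `a` to `u ^ a`,
well defined since `u ^ d = 1`. -/
def zmodPowHom {e : ℕ} (d : ℕ) (u : (ZMod e)ˣ) (hu : u ^ d = 1) :
    Multiplicative (ZMod d) →* (ZMod e)ˣ :=
  AddMonoidHom.toMultiplicativeLeft
    (ZMod.lift d ⟨zmultiplesHom (Additive (ZMod e)ˣ) (Additive.ofMul u), by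
      simpa [zmultiplesHom, ← ofMul_pow] using congrArg Additive.ofMul hu⟩)

/-- The group `G(d,e,t)` where `u` is the unit of `ZMod e` given by `t` :
the semidirect product `(ℤ/eℤ) ⋊ (ℤ/dℤ)` in which `a ∈ ℤ/dℤ` acts on `ℤ/eℤ` by
`b ↦ t ^ a * b`.  This is the group with presentation
`⟨x, y | x ^ d = 1, y ^ e = 1, x⁻¹ * y * x = y ^ t⟩`, the element `(b, a)`
corresponding to `x ^ a * y ^ b`. -/
abbrev Gdet (d e : ℕ) (u : (ZMod e)ˣ) (hu : u ^ d = 1) : Type :=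
  SemidirectProduct (Multiplicative (ZMod e)) (Multiplicative (ZMod d))
    ((unitsMulAut e).comp (zmodPowHom d u hu))


open SemidirectProduct

lemma conj_inl_aux {N G : Type*} [CommGroup N] [Group G] {φ : G →* MulAut N} {n n' : N}
    (h : ConjClasses.mk (inl n : N ⋊[φ] G) = ConjClasses.mk (inl n')) :
    ∃ a : G, φ a n = n' := by
  rw [ConjClasses.mk_eq_mk_iff_isConj, isConj_iff] at h
  obtain ⟨g, hg⟩ := h
  refine ⟨g.right, ?_⟩
  have := congrArg SemidirectProduct.left hg
  simp only [mul_left, mul_right, inv_left, inv_right, left_inl, right_inl, left_inr,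
    mul_one, map_inv] at this
  rw [MulAut.apply_inv_self, mul_comm, inv_mul_cancel_left] at this
  exact this

lemma finite_sdp {N G : Type*} [Group G] [Group N] [Finite N] [Finite G] {φ : G →* MulAut N} :
    Finite (N ⋊[φ] G) :=
  Finite.of_injective (fun g => (g.left, g.right))
    (fun a b h => SemidirectProduct.ext (congrArg Prod.fst h) (congrArg Prod.snd h))

lemma main_aux (d e : ℕ) (hd : 0 < d) (he : 0 < e) (u : (ZMod e)ˣ) (hu : u ^ d = 1) :
    d ≤ Nat.card (ConjClasses (Gdet d e u hu)) ∧
    e ≤ d * Nat.card (ConjClasses (Gdet d e u hu)) := by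
  haveI : NeZero e := ⟨he.ne'⟩
  haveI : NeZero d := ⟨hd.ne'⟩
  haveI : Finite (Gdet d e u hu) := finite_sdp
  set φ := (unitsMulAut e).comp (zmodPowHom d u hu)
  constructor
  · calc d = Nat.card (Multiplicative (ZMod d)) := by
          rw [Nat.card_eq_fintype_card, Fintype.card_multiplicative, ZMod.card]
      _ = Nat.card (ConjClasses (Multiplicative (ZMod d))) :=
          Nat.card_congr ConjClasses.mkEquiv
      _ ≤ Nat.card (ConjClasses (Gdet d e u hu)) :=
          Nat.card_le_card_of_surjective (ConjClasses.map rightHom)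
            (ConjClasses.map_surjective rightHom_surjective)
  · classical
    haveI := Fintype.ofFinite (ConjClasses (Gdet d e u hu))
    set f : Multiplicative (ZMod e) → ConjClasses (Gdet d e u hu) :=
      fun b => ConjClasses.mk (inl b) with hf
    have key : (Finset.univ : Finset (Multiplicative (ZMod e))).card ≤
        d * (Finset.univ.image f).card := by
      apply Finset.card_le_mul_card_image
      intro c hc
      obtain ⟨b0, hb0⟩ := Finset.mem_image.mp hc
      set F : Multiplicative (ZMod d) → Multiplicative (ZMod e) := fun a => φ a b0 with hF
      calc (Finset.univ.filter fun b => f b = c).card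
          ≤ (Finset.univ.image F).card := by
            apply Finset.card_le_card
            intro b' hb'
            rw [Finset.mem_filter] at hb'
            obtain ⟨a, ha⟩ := conj_inl_aux (φ := φ) (hb0.2.trans hb'.2.symm)
            exact Finset.mem_image.mpr ⟨a, Finset.mem_univ _, ha⟩
        _ ≤ Fintype.card (Multiplicative (ZMod d)) := by
            exact (Finset.card_image_le).trans (le_of_eq (Finset.card_univ))
        _ = d := by rw [Fintype.card_multiplicative, ZMod.card]
    calc e = (Finset.univ : Finset (Multiplicative (ZMod e))).card := by
          rw [Finset.card_univ, Fintype.card_multiplicative, ZMod.card]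
      _ ≤ d * (Finset.univ.image f).card := key
      _ ≤ d * Nat.card (ConjClasses (Gdet d e u hu)) := by
          rw [Nat.card_eq_fintype_card]
          exact Nat.mul_le_mul_left d ((Finset.card_le_card (Finset.subset_univ _)).trans_eq Finset.card_univ)

/-- **Bounds on the class number of `G(d,e,t)`.**
Let `n = d * e` be squarefree and `t` an integer whose residue class mod `e` has
multiplicative order `d` in `(ℤ/eℤ)ˣ`.  Then the number of conjugacy classes `k(G)` of
`G = G(d,e,t)` satisfies `d ≤ k(G)` and `e ≤ d * k(G)`. -/
theorem classNumber_bounds (d e : ℕ) (hd : 0 < d) (he : 0 < e)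
    (hn : Squarefree (d * e)) (t : ℤ) (u : (ZMod e)ˣ)
    (hu : (u : ZMod e) = (t : ZMod e)) (hord : orderOf u = d) :
    d ≤ Nat.card (ConjClasses (Gdet d e u (by rw [← hord]; exact pow_orderOf_eq_one u))) ∧
    e ≤ d * Nat.card (ConjClasses (Gdet d e u (by rw [← hord]; exact pow_orderOf_eq_one u))) := by
  exact main_aux d e hd he u _
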